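/- Let g be a metric on an open set U ⊆ ℝ⁴ written in coordinates (u,x), and let S = u∂_u + x^i∂_i be the scaling vector field. Then for every smooth φ on U, □_g(Sφ) − S(□_gφ) = (∇_α R^{αβ} ∇_β)φ + (1/2)(4 + S(ln d)) □_gφ, where R = −d^{-1/2} L_S( d^{1/2} g⁻¹ − h ) − 2 d^{-1/2}( d^{1/2} g⁻¹ − h ) + R₁, and R₁ is the symmetric tensor whose only nonzero components are R₁^{iu} = R₁^{ui} = d^{-1/2} ω^i τ_x⁻². -/

import Mathlib

noncomputable section

/-- Points of the coordinate chart `ℝ⁴`. -/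
abbrev Pt : Type := Fin 4 → ℝ

/-- Coordinate partial derivative `∂_α f`. -/
def pd (α : Fin 4) (f : Pt → ℝ) (x : Pt) : ℝ :=
  fderiv ℝ f x (Pi.single α (1 : ℝ))

/-- `|g| = |det (g_{αβ})|`. -/
def adet (g : Pt → Matrix (Fin 4) (Fin 4) ℝ) (x : Pt) : ℝ := |(g x).det|

/-- Inverse metric `g^{αβ}`. -/
def ginv (g : Pt → Matrix (Fin 4) (Fin 4) ℝ) (x : Pt) : Matrix (Fin 4) (Fin 4) ℝ := (g x)⁻¹

/-- The wave operator `□_g φ = |g|^{-1/2} ∂_α(|g|^{1/2} g^{αβ} ∂_β φ)`. -/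
def boxg (g : Pt → Matrix (Fin 4) (Fin 4) ℝ) (φ : Pt → ℝ) (x : Pt) : ℝ :=
  (Real.sqrt (adet g x))⁻¹ *
    ∑ α : Fin 4, pd α (fun y => Real.sqrt (adet g y) * ∑ β : Fin 4, ginv g y α β * pd β φ y) x

/-- `X f = X^α ∂_α f`. -/
def Xapp (X : Fin 4 → Pt → ℝ) (f : Pt → ℝ) (x : Pt) : ℝ := ∑ γ : Fin 4, X γ x * pd γ f x

/-- A smooth symmetric everywhere-nondegenerate metric on `U`. -/
structure IsMetricOn (g : Pt → Matrix (Fin 4) (Fin 4) ℝ) (U : Set Pt) : Prop where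
  smooth : ∀ α β : Fin 4, ContDiffOn ℝ (⊤ : ℕ∞) (fun x => g x α β) U
  symm : ∀ x ∈ U, ∀ α β : Fin 4, g x α β = g x β α
  det_ne : ∀ x ∈ U, (g x).det ≠ 0

/-- Deformation tensor `π_{αβ} = (L_X g)_{αβ}` of `X` (lower indices). -/
def piLow (g : Pt → Matrix (Fin 4) (Fin 4) ℝ) (X : Fin 4 → Pt → ℝ) (x : Pt) (α β : Fin 4) : ℝ :=
  (∑ γ : Fin 4, X γ x * pd γ (fun y => g y α β) x)
    + (∑ γ : Fin 4, g x γ β * pd α (X γ) x) + (∑ γ : Fin 4, g x α γ * pd β (X γ) x)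

/-- Raised deformation tensor `π^{αβ}`. -/
def piUp (g : Pt → Matrix (Fin 4) (Fin 4) ℝ) (X : Fin 4 → Pt → ℝ) (x : Pt) (α β : Fin 4) : ℝ :=
  ∑ α' : Fin 4, ∑ β' : Fin 4, ginv g x α α' * ginv g x β β' * piLow g X x α' β'

/-- Normalized deformation tensor `π̂^{αβ} = π^{αβ} - (1/2) g^{αβ} (g_{γδ} π^{γδ})`. -/
def hatPi (g : Pt → Matrix (Fin 4) (Fin 4) ℝ) (X : Fin 4 → Pt → ℝ) (x : Pt) (α β : Fin 4) : ℝ :=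
  piUp g X x α β - (1/2) * ginv g x α β * (∑ γ : Fin 4, ∑ δ : Fin 4, g x γ δ * piUp g X x γ δ)

/-- Lie derivative of a contravariant 2-tensor:
`(L_X R)^{αβ} = X^γ∂_γR^{αβ} - R^{γβ}∂_γX^α - R^{αγ}∂_γX^β`. -/
def lieT (X : Fin 4 → Pt → ℝ) (R : Pt → Fin 4 → Fin 4 → ℝ) (x : Pt) (α β : Fin 4) : ℝ :=
  (∑ γ : Fin 4, X γ x * pd γ (fun y => R y α β) x)
    - (∑ γ : Fin 4, R x γ β * pd γ (X α) x)
    - (∑ γ : Fin 4, R x α γ * pd γ (X β) x)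

/-- `τ_x = ⟨x⟩ = (1+|x|²)^{1/2}` in coordinates `(u,x)` (the index `0` is `u`). -/
def tauX (p : Pt) : ℝ := Real.sqrt (1 + ∑ i : Fin 3, (p i.succ) ^ 2)

/-- `r = |x|`. -/
def rB (p : Pt) : ℝ := Real.sqrt (∑ i : Fin 3, (p i.succ) ^ 2)

/-- The reference tensor `h`: `h^{uu}=0`, `h^{ui}=h^{iu}=-ω^i`, `h^{ij}=δ^{ij}`,
where `ω^i = x^i/τ_x`. -/
def hmat (p : Pt) (α β : Fin 4) : ℝ :=
  if α = 0 then (if β = 0 then 0 else -(p β / tauX p))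
  else if β = 0 then -(p α / tauX p)
  else if α = β then 1 else 0

/-- `d^{1/2} g⁻¹ - h`. -/
def Mten (g : Pt → Matrix (Fin 4) (Fin 4) ℝ) (p : Pt) (α β : Fin 4) : ℝ :=
  Real.sqrt (adet g p) * ginv g p α β - hmat p α β

/-- Second-order operator `(∇_α R^{αβ} ∇_β)φ = |g|^{-1/2}∂_α(|g|^{1/2} R^{αβ} ∂_βφ)`. -/
def divForm (g : Pt → Matrix (Fin 4) (Fin 4) ℝ) (R : Pt → Fin 4 → Fin 4 → ℝ)
    (φ : Pt → ℝ) (x : Pt) : ℝ :=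
  (Real.sqrt (adet g x))⁻¹ *
    ∑ α : Fin 4, pd α (fun y => Real.sqrt (adet g y) * ∑ β : Fin 4, R y α β * pd β φ y) x

/-- The scaling vector field `S = u∂_u + x^i∂_i = x^α∂_α`. -/
def Svf : Fin 4 → Pt → ℝ := fun α q => q α

/-- The correction tensor `R₁` of Statement 9: `R₁^{iu} = R₁^{ui} = d^{-1/2}ω^iτ_x⁻²`. -/
def R1S (g : Pt → Matrix (Fin 4) (Fin 4) ℝ) (q : Pt) (α β : Fin 4) : ℝ :=
  if α = 0 ∧ β ≠ 0 then (Real.sqrt (adet g q))⁻¹ * (q β / tauX q) * ((tauX q) ^ 2)⁻¹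
  else if β = 0 ∧ α ≠ 0 then (Real.sqrt (adet g q))⁻¹ * (q α / tauX q) * ((tauX q) ^ 2)⁻¹
  else 0

/-! ### Basic pd calculus -/

section PdCalc

variable {f f₁ f₂ : Pt → ℝ} {p : Pt} {α β : Fin 4}

lemma pd_congr_nhds (h : f₁ =ᶠ[nhds p] f₂) : pd α f₁ p = pd α f₂ p := by
  unfold pd; rw [h.fderiv_eq]

lemma pd_const (c : ℝ) : pd α (fun _ => c) p = 0 := by
  unfold pd; rw [fderiv_fun_const]; simp

lemma pd_add (h₁ : DifferentiableAt ℝ f₁ p) (h₂ : DifferentiableAt ℝ f₂ p) :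
    pd α (fun y => f₁ y + f₂ y) p = pd α f₁ p + pd α f₂ p := by
  unfold pd; rw [fderiv_fun_add h₁ h₂]; simp

lemma pd_neg : pd α (fun y => -f y) p = -pd α f p := by
  unfold pd; rw [fderiv_fun_neg]; simp

lemma pd_mul (h₁ : DifferentiableAt ℝ f₁ p) (h₂ : DifferentiableAt ℝ f₂ p) :
    pd α (fun y => f₁ y * f₂ y) p = pd α f₁ p * f₂ p + f₁ p * pd α f₂ p := by
  unfold pd; rw [fderiv_fun_mul h₁ h₂]; simp; ring

lemma pd_sum {ι : Type*} [Fintype ι] {F : ι → Pt → ℝ}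
    (h : ∀ i, DifferentiableAt ℝ (F i) p) :
    pd α (fun y => ∑ i, F i y) p = ∑ i, pd α (F i) p := by
  unfold pd; rw [fderiv_fun_sum (fun i _ => h i)]; simp

lemma pd_coord : pd α (fun y : Pt => y β) p = if β = α then 1 else 0 := by
  have : (fun y : Pt => y β) = fun y => (ContinuousLinearMap.proj (R := ℝ)
      (φ := fun _ : Fin 4 => ℝ) β) y := rfl
  unfold pd
  rw [this, ContinuousLinearMap.fderiv]
  simp [Pi.single_apply]

lemma pd_comp_hasDerivAt {h : ℝ → ℝ} {d : ℝ} (hf : DifferentiableAt ℝ f p)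
    (hh : HasDerivAt h d (f p)) :
    pd α (fun y => h (f y)) p = d * pd α f p := by
  unfold pd
  have H : HasFDerivAt (fun y => h (f y)) (d • fderiv ℝ f p) p :=
    hh.comp_hasFDerivAt p hf.hasFDerivAt
  rw [H.fderiv]; simp

end PdCalc

/-! ### Smoothness framework -/

def Sm (U : Set Pt) (f : Pt → ℝ) : Prop := ContDiffOn ℝ (⊤ : ℕ∞) f U

section SmLems

variable {U : Set Pt} {f f₁ f₂ : Pt → ℝ} {p : Pt} {α β : Fin 4}

lemma Sm.cdAt (hU : IsOpen U) (hf : Sm U f) (hp : p ∈ U) :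
    ContDiffAt ℝ (⊤ : ℕ∞) f p := (hf p hp).contDiffAt (hU.mem_nhds hp)

lemma Sm.diffAt (hU : IsOpen U) (hf : Sm U f) (hp : p ∈ U) :
    DifferentiableAt ℝ f p := (hf.cdAt hU hp).differentiableAt (by simp)

lemma Sm.add (h₁ : Sm U f₁) (h₂ : Sm U f₂) : Sm U (fun y => f₁ y + f₂ y) := ContDiffOn.add h₁ h₂

lemma Sm.mul (h₁ : Sm U f₁) (h₂ : Sm U f₂) : Sm U (fun y => f₁ y * f₂ y) := ContDiffOn.mul h₁ h₂

lemma Sm.neg (h : Sm U f) : Sm U (fun y => -f y) := ContDiffOn.neg h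

lemma Sm.const (c : ℝ) : Sm U (fun _ => c) := contDiffOn_const

lemma Sm.coord (β : Fin 4) : Sm U (fun y : Pt => y β) :=
  (ContinuousLinearMap.contDiff (ContinuousLinearMap.proj (R := ℝ)
    (φ := fun _ : Fin 4 => ℝ) β)).contDiffOn

lemma Sm.sum {ι : Type*} [Fintype ι] {F : ι → Pt → ℝ} (h : ∀ i, Sm U (F i)) :
    Sm U (fun y => ∑ i, F i y) := by
  classical
  have H : ∀ s : Finset ι, Sm U (fun y => ∑ i ∈ s, F i y) := by
    intro s
    induction s using Finset.cons_induction with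
    | empty => simpa using Sm.const (U := U) 0
    | cons a s ha ih =>
      simp only [Finset.sum_cons]; exact ContDiffOn.add (h a) ih
  exact H Finset.univ

lemma Sm.inv (h : Sm U f) (hne : ∀ y ∈ U, f y ≠ 0) : Sm U (fun y => (f y)⁻¹) :=
  fun y hy => ((h y hy).inv (hne y hy))

lemma Sm.pd (hU : IsOpen U) (hf : Sm U f) (α : Fin 4) : Sm U (pd α f) := by
  have h1 : ContDiffOn ℝ (⊤ : ℕ∞) (fderiv ℝ f) U :=
    hf.fderiv_of_isOpen hU (le_refl _)
  have : Sm U (fun y => (fderiv ℝ f y) (Pi.single α 1)) :=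
    h1.clm_apply contDiffOn_const
  exact this

end SmLems
/-! ### Second derivative symmetry -/

section Symm

variable {U : Set Pt} {f : Pt → ℝ} {p : Pt} {α β : Fin 4}

lemma pd_pd_eq (h : DifferentiableAt ℝ (fderiv ℝ f) p) :
    pd α (pd β f) p = fderiv ℝ (fderiv ℝ f) p (Pi.single α 1) (Pi.single β 1) := by
  unfold pd
  rw [fderiv_clm_apply h (differentiableAt_const _)]
  simp

lemma pd_comm (hU : IsOpen U) (hf : Sm U f) (hp : p ∈ U) :
    pd α (pd β f) p = pd β (pd α f) p := by
  have hcd : ContDiffAt ℝ (⊤ : ℕ∞) f p := hf.cdAt hU hp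
  have hd : DifferentiableAt ℝ (fderiv ℝ f) p :=
    (hcd.fderiv_right (m := (⊤ : ℕ∞)) (by exact_mod_cast le_top)).differentiableAt
      (by simp)
  have hs : IsSymmSndFDerivAt ℝ f p := hcd.isSymmSndFDerivAt (by
      have : ((2:ℕ∞) : WithTop ℕ∞) ≤ ((⊤:ℕ∞) : WithTop ℕ∞) := WithTop.coe_le_coe.mpr le_top
      simpa using this)
  rw [pd_pd_eq hd, pd_pd_eq hd, hs]

end Symm

/-! ### Smoothness of det, adet, ginv -/

section DetSm

variable {U : Set Pt} {p : Pt} {α β : Fin 4}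

lemma Sm.finsetProd {ι : Type*} (s : Finset ι) (f : ι → Pt → ℝ)
    (h : ∀ i ∈ s, Sm U (f i)) : Sm U (fun y => ∏ i ∈ s, f i y) := by
  classical
  induction s using Finset.cons_induction with
  | empty => simpa using Sm.const (U := U) 1
  | cons a s ha ih =>
    simp only [Finset.prod_cons]
    exact ContDiffOn.mul (h a (Finset.mem_cons_self a s))
      (ih fun i hi => h i (Finset.mem_cons_of_mem hi))

lemma Sm.det {M : Pt → Matrix (Fin 4) (Fin 4) ℝ}
    (h : ∀ i j, Sm U (fun y => M y i j)) : Sm U (fun y => (M y).det) := by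
  have he : (fun y => (M y).det)
      = fun y => ∑ σ : Equiv.Perm (Fin 4),
          ((Equiv.Perm.sign σ : ℤ) : ℝ) * ∏ i, M y (σ i) i := by
    funext y
    rw [Matrix.det_apply]
    simp [Units.smul_def, zsmul_eq_mul]
  rw [he]
  exact Sm.sum fun σ => (Sm.const _).mul
    (Sm.finsetProd _ _ fun i _ => h (σ i) i)

variable {g : Pt → Matrix (Fin 4) (Fin 4) ℝ}

lemma smDet (hg : IsMetricOn g U) : Sm U (fun y => (g y).det) :=
  Sm.det fun i j => hg.smooth i j

lemma adet_pos (hg : IsMetricOn g U) (hp : p ∈ U) : 0 < adet g p :=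
  abs_pos.mpr (hg.det_ne p hp)

lemma smAdet (hU : IsOpen U) (hg : IsMetricOn g U) : Sm U (adet g) := by
  intro y hy
  have hc : ContDiffAt ℝ (⊤ : ℕ∞) (fun z => (g z).det) y := (smDet hg).cdAt hU hy
  have hcont : ContinuousAt (fun z => (g z).det) y := hc.continuousAt
  have hne := hg.det_ne y hy
  rcases lt_or_gt_of_ne hne with hneg | hpos
  · have hev : ∀ᶠ z in nhds y, (g z).det < 0 :=
      hcont.eventually_lt continuousAt_const hneg
    have : adet g =ᶠ[nhds y] fun z => -(g z).det := by
      filter_upwards [hev] with z hz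
      simp [adet, abs_of_neg hz]
    exact ((hc.neg).congr_of_eventuallyEq this).contDiffWithinAt
  · have hev : ∀ᶠ z in nhds y, 0 < (g z).det :=
      continuousAt_const.eventually_lt hcont hpos
    have : adet g =ᶠ[nhds y] fun z => (g z).det := by
      filter_upwards [hev] with z hz
      simp [adet, abs_of_pos hz]
    exact (hc.congr_of_eventuallyEq this).contDiffWithinAt

lemma smSqrtAdet (hU : IsOpen U) (hg : IsMetricOn g U) :
    Sm U (fun y => Real.sqrt (adet g y)) := by
  intro y hy
  exact ((Real.contDiffAt_sqrt (ne_of_gt (adet_pos hg hy))).comp y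
    ((smAdet hU hg).cdAt hU hy)).contDiffWithinAt

lemma sqrtAdet_pos (hg : IsMetricOn g U) (hp : p ∈ U) :
    0 < Real.sqrt (adet g p) := Real.sqrt_pos.mpr (adet_pos hg hp)

lemma smGinv (hU : IsOpen U) (hg : IsMetricOn g U) (α β : Fin 4) :
    Sm U (fun y => ginv g y α β) := by
  have he : (fun y => ginv g y α β)
      = fun y => ((g y).det)⁻¹ * ((g y).updateRow β (Pi.single α 1)).det := by
    funext y
    rw [ginv, Matrix.inv_def]
    simp [Matrix.adjugate_apply, Ring.inverse_eq_inv']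
  rw [he]
  refine ((smDet hg).inv (fun y hy => hg.det_ne y hy)).mul (Sm.det fun i j => ?_)
  by_cases hib : i = β
  · simpa [Matrix.updateRow_apply, hib] using Sm.const (U := U) ((Pi.single α (1:ℝ) : Pt) j)
  · have hfun : (fun y => (g y).updateRow β (Pi.single α 1) i j) = fun y => g y i j :=
      funext fun y => by simp [Matrix.updateRow_apply, hib]
    rw [hfun]; exact hg.smooth i j

end DetSm
/-! ### tauX and hmat derivatives -/

section Tau

variable {p y : Pt} {α β γ : Fin 4}

def qX (y : Pt) : ℝ := 1 + ∑ i : Fin 3, (y i.succ) ^ 2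

lemma qX_pos (y : Pt) : 0 < qX y := by
  have : (0:ℝ) ≤ ∑ i : Fin 3, (y i.succ) ^ 2 :=
    Finset.sum_nonneg fun i _ => sq_nonneg _
  unfold qX; linarith

lemma tauX_eq_sqrt_qX (y : Pt) : tauX y = Real.sqrt (qX y) := rfl

lemma tauX_pos (y : Pt) : 0 < tauX y := Real.sqrt_pos.mpr (qX_pos y)

lemma tauX_ne (y : Pt) : tauX y ≠ 0 := ne_of_gt (tauX_pos y)

lemma tauX_sq (y : Pt) : tauX y ^ 2 = qX y := Real.sq_sqrt (le_of_lt (qX_pos y))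

lemma diff_qX : DifferentiableAt ℝ qX y := by
  unfold qX
  exact (differentiableAt_const _).add (DifferentiableAt.fun_sum fun i _ => by
    have : DifferentiableAt ℝ (fun z : Pt => z i.succ) y :=
      (ContinuousLinearMap.proj (R := ℝ) (φ := fun _ : Fin 4 => ℝ) i.succ).differentiableAt
    exact this.pow 2)

lemma pd_qX : pd γ qX y = ∑ i : Fin 3, (if i.succ = γ then 2 * y i.succ else 0) := by
  unfold qX
  have h1 : pd γ (fun z : Pt => 1 + ∑ i : Fin 3, (z i.succ)^2) y
      = pd γ (fun _ => (1:ℝ)) y + pd γ (fun z => ∑ i : Fin 3, (z i.succ)^2) y :=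
    pd_add (differentiableAt_const _) (by
      exact DifferentiableAt.fun_sum fun i _ =>
        ((ContinuousLinearMap.proj (R := ℝ) (φ := fun _ : Fin 4 => ℝ) i.succ).differentiableAt).pow 2)
  rw [h1, pd_const, zero_add]
  have h2 : pd γ (fun z : Pt => ∑ i : Fin 3, (z i.succ)^2) y
      = ∑ i : Fin 3, pd γ (fun z : Pt => (z i.succ)^2) y :=
    pd_sum fun i =>
      ((ContinuousLinearMap.proj (R := ℝ) (φ := fun _ : Fin 4 => ℝ) i.succ).differentiableAt).pow 2
  rw [h2]
  refine Finset.sum_congr rfl fun i _ => ?_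
  have hc : DifferentiableAt ℝ (fun z : Pt => z i.succ) y :=
    (ContinuousLinearMap.proj (R := ℝ) (φ := fun _ : Fin 4 => ℝ) i.succ).differentiableAt
  have : pd γ (fun z : Pt => z i.succ * z i.succ) y
      = pd γ (fun z : Pt => z i.succ) y * y i.succ + y i.succ * pd γ (fun z : Pt => z i.succ) y :=
    pd_mul hc hc
  have hpow : (fun z : Pt => (z i.succ)^2) = fun z : Pt => z i.succ * z i.succ := by
    funext z; ring
  rw [hpow, this, pd_coord]
  by_cases h : i.succ = γ <;> simp [h] <;> ring

lemma diff_tauX : DifferentiableAt ℝ tauX y := by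
  have : DifferentiableAt ℝ (fun z => Real.sqrt (qX z)) y :=
    ((Real.hasDerivAt_sqrt (ne_of_gt (qX_pos y))).comp_hasFDerivAt y
      diff_qX.hasFDerivAt).differentiableAt
  exact this

lemma pd_tauX : pd γ tauX y = (if γ = 0 then 0 else y γ) / tauX y := by
  have h : pd γ (fun z => Real.sqrt (qX z)) y
      = (1 / (2 * Real.sqrt (qX y))) * pd γ qX y :=
    pd_comp_hasDerivAt diff_qX (Real.hasDerivAt_sqrt (ne_of_gt (qX_pos y)))
  have htx : pd γ tauX y = (1 / (2 * tauX y)) * pd γ qX y := h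
  rw [htx, pd_qX]
  by_cases hγ : γ = 0
  · subst hγ
    have : ∀ i : Fin 3, (if i.succ = (0 : Fin 4) then 2 * y i.succ else 0) = 0 := fun i => by
      simp [Fin.succ_ne_zero]
    simp [this]
  · obtain ⟨j, rfl⟩ := Fin.exists_succ_eq.mpr hγ
    have hsum : (∑ i : Fin 3, if i.succ = j.succ then 2 * y i.succ else 0) = 2 * y j.succ := by
      simp [Fin.succ_inj]
    rw [hsum, if_neg hγ]
    field_simp
lemma sum_coord_sq (y : Pt) :
    ∑ γ : Fin 4, y γ * (if γ = 0 then 0 else y γ) = tauX y ^ 2 - 1 := by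
  rw [Fin.sum_univ_succ, tauX_sq]
  simp [Fin.succ_ne_zero, qX, sq]

lemma diff_omega (j : Fin 4) : DifferentiableAt ℝ (fun z : Pt => z j / tauX z) y := by
  have hc : DifferentiableAt ℝ (fun z : Pt => z j) y :=
    (ContinuousLinearMap.proj (R := ℝ) (φ := fun _ : Fin 4 => ℝ) j).differentiableAt
  have he : (fun z : Pt => z j / tauX z) = fun z : Pt => z j * (tauX z)⁻¹ := by
    funext z; rw [div_eq_mul_inv]
  rw [he]
  exact hc.mul (diff_tauX.inv (tauX_ne y))

lemma pd_omega (j : Fin 4) :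
    pd γ (fun z : Pt => z j / tauX z) y
      = (if j = γ then 1 else 0) / tauX y
          - y j * (if γ = 0 then 0 else y γ) / tauX y ^ 3 := by
  have hc : DifferentiableAt ℝ (fun z : Pt => z j) y :=
    (ContinuousLinearMap.proj (R := ℝ) (φ := fun _ : Fin 4 => ℝ) j).differentiableAt
  have hinv : DifferentiableAt ℝ (fun z : Pt => (tauX z)⁻¹) y := by
    exact diff_tauX.inv (tauX_ne y)
  have he : (fun z : Pt => z j / tauX z) = fun z : Pt => z j * (tauX z)⁻¹ := by
    funext z; rw [div_eq_mul_inv]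
  rw [he, pd_mul hc hinv]
  have hi : pd γ (fun z : Pt => (tauX z)⁻¹) y = -(tauX y ^ 2)⁻¹ * pd γ tauX y :=
    pd_comp_hasDerivAt diff_tauX (hasDerivAt_inv (tauX_ne y))
  rw [hi, pd_coord, pd_tauX]
  have h := tauX_ne y
  split_ifs <;> (try simp) <;> (try (field_simp; try ring)) <;> (try tauto)

lemma S_omega (j : Fin 4) (y : Pt) :
    ∑ γ : Fin 4, y γ * pd γ (fun z : Pt => z j / tauX z) y = y j / tauX y ^ 3 := by
  have : ∀ γ : Fin 4, y γ * pd γ (fun z : Pt => z j / tauX z) y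
      = y γ * (if j = γ then 1 else 0) / tauX y
          - y j * (y γ * (if γ = 0 then 0 else y γ)) / tauX y ^ 3 := fun γ => by
    rw [pd_omega]; ring
  simp only [this]
  rw [Finset.sum_sub_distrib, ← Finset.sum_div, ← Finset.sum_div, ← Finset.mul_sum,
    sum_coord_sq]
  have hsum : ∑ γ : Fin 4, y γ * (if j = γ then 1 else 0) = y j := by
    rw [Finset.sum_congr rfl (fun γ _ => by rw [mul_ite, mul_one, mul_zero])]
    exact Finset.sum_ite_eq Finset.univ j (fun γ => y γ) |>.trans (by simp)
  rw [hsum]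
  have h := tauX_ne y
  field_simp
  ring

end Tau
/-! ### The key tensor identity -/

section Key

variable {U : Set Pt} {g : Pt → Matrix (Fin 4) (Fin 4) ℝ} {y : Pt} {α β γ : Fin 4}

def Fm (g : Pt → Matrix (Fin 4) (Fin 4) ℝ) (α β : Fin 4) (y : Pt) : ℝ :=
  Real.sqrt (adet g y) * ginv g y α β

lemma smFm (hU : IsOpen U) (hg : IsMetricOn g U) (α β : Fin 4) : Sm U (Fm g α β) :=
  (smSqrtAdet hU hg).mul (smGinv hU hg α β)

lemma diff_hmatE (α β : Fin 4) (y : Pt) : DifferentiableAt ℝ (fun z => hmat z α β) y := by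
  rcases em (α = 0) with hα | hα <;> rcases em (β = 0) with hβ | hβ
  · rw [show (fun z : Pt => hmat z α β) = fun _ => (0:ℝ) from
      funext fun z => by simp [hmat, hα, hβ]]
    exact differentiableAt_const _
  · rw [show (fun z : Pt => hmat z α β) = fun z => -(z β / tauX z) from
      funext fun z => by simp [hmat, hα, hβ]]
    exact (diff_omega β).neg
  · rw [show (fun z : Pt => hmat z α β) = fun z => -(z α / tauX z) from
      funext fun z => by simp [hmat, hα, hβ]]
    exact (diff_omega α).neg
  · rw [show (fun z : Pt => hmat z α β) = fun _ => (if α = β then (1:ℝ) else 0) from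
      funext fun z => by simp [hmat, hα, hβ]]
    exact differentiableAt_const _

lemma Shmat_R1 (hg : IsMetricOn g U) (hy : y ∈ U) (α β : Fin 4) :
    (∑ γ : Fin 4, y γ * pd γ (fun z => hmat z α β) y)
      + Real.sqrt (adet g y) * R1S g y α β = 0 := by
  have hs : Real.sqrt (adet g y) ≠ 0 := ne_of_gt (sqrtAdet_pos hg hy)
  have hτ : tauX y ≠ 0 := tauX_ne y
  rcases em (α = 0) with hα | hα <;> rcases em (β = 0) with hβ | hβ
  · subst hα; subst hβ
    have h0 : (fun z : Pt => hmat z 0 0) = fun _ => (0:ℝ) := funext fun z => by simp [hmat]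
    simp [h0, pd_const, R1S]
  · subst hα
    have h0 : (fun z : Pt => hmat z 0 β) = fun z => -(z β / tauX z) :=
      funext fun z => by simp [hmat, hβ]
    have hpd : ∀ γ : Fin 4, pd γ (fun z : Pt => hmat z 0 β) y
        = -pd γ (fun z : Pt => z β / tauX z) y := fun γ => by rw [h0]; exact pd_neg
    have hsum : (∑ γ : Fin 4, y γ * pd γ (fun z : Pt => hmat z 0 β) y)
        = -(y β / tauX y ^ 3) := by
      simp only [hpd, mul_neg, Finset.sum_neg_distrib]
      rw [S_omega β y]
    have hR : R1S g y 0 β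
        = (Real.sqrt (adet g y))⁻¹ * (y β / tauX y) * ((tauX y) ^ 2)⁻¹ := by
      simp [R1S, hβ]
    rw [hsum, hR]
    field_simp
    ring
  · subst hβ
    have h0 : (fun z : Pt => hmat z α 0) = fun z => -(z α / tauX z) :=
      funext fun z => by simp [hmat, hα]
    have hpd : ∀ γ : Fin 4, pd γ (fun z : Pt => hmat z α 0) y
        = -pd γ (fun z : Pt => z α / tauX z) y := fun γ => by rw [h0]; exact pd_neg
    have hsum : (∑ γ : Fin 4, y γ * pd γ (fun z : Pt => hmat z α 0) y)
        = -(y α / tauX y ^ 3) := by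
      simp only [hpd, mul_neg, Finset.sum_neg_distrib]
      rw [S_omega α y]
    have hR : R1S g y α 0
        = (Real.sqrt (adet g y))⁻¹ * (y α / tauX y) * ((tauX y) ^ 2)⁻¹ := by
      simp [R1S, hα]
    rw [hsum, hR]
    field_simp
    ring
  · have h0 : (fun z : Pt => hmat z α β) = fun _ => (if α = β then (1:ℝ) else 0) :=
      funext fun z => by simp [hmat, hα, hβ]
    have hR : R1S g y α β = 0 := by simp [R1S, hα, hβ]
    simp [h0, pd_const, hR]

lemma keyId (hU : IsOpen U) (hg : IsMetricOn g U) (hy : y ∈ U) (α β : Fin 4) :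
    Real.sqrt (adet g y) * (-((Real.sqrt (adet g y))⁻¹ * lieT Svf (Mten g) y α β)
        - 2 * (Real.sqrt (adet g y))⁻¹ * Mten g y α β + R1S g y α β)
      = -(∑ γ : Fin 4, y γ * pd γ (Fm g α β) y) := by
  have hs : Real.sqrt (adet g y) ≠ 0 := ne_of_gt (sqrtAdet_pos hg hy)
  have hdF : DifferentiableAt ℝ (Fm g α β) y := (smFm hU hg α β).diffAt hU hy
  have hMfun : (fun z => Mten g z α β) = fun z => Fm g α β z + -(hmat z α β) :=
    funext fun z => by rw [Mten, Fm]; ring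
  have hpdM : ∀ γ : Fin 4, pd γ (fun z => Mten g z α β) y
      = pd γ (Fm g α β) y - pd γ (fun z => hmat z α β) y := fun γ => by
    rw [hMfun, pd_add (f₂ := fun z => -(hmat z α β)) hdF (diff_hmatE α β y).neg, pd_neg]; ring
  have hSvf : ∀ δ γ : Fin 4, pd γ (Svf δ) y = if δ = γ then 1 else 0 := fun δ γ => pd_coord
  have hcol1 : (∑ γ : Fin 4, Mten g y γ β * pd γ (Svf α) y) = Mten g y α β := by
    simp [hSvf, mul_ite]
  have hcol2 : (∑ γ : Fin 4, Mten g y α γ * pd γ (Svf β) y) = Mten g y α β := by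
    simp [hSvf, mul_ite]
  have hlie : lieT Svf (Mten g) y α β
      = (∑ γ : Fin 4, y γ * pd γ (fun z => Mten g z α β) y)
          - Mten g y α β - Mten g y α β := by
    rw [lieT, hcol1, hcol2]
    rfl
  have hsplit : (∑ γ : Fin 4, y γ * pd γ (fun z => Mten g z α β) y)
      = (∑ γ : Fin 4, y γ * pd γ (Fm g α β) y)
          - (∑ γ : Fin 4, y γ * pd γ (fun z => hmat z α β) y) := by
    simp only [hpdM, mul_sub, Finset.sum_sub_distrib]
  have hkey := Shmat_R1 hg hy α β
  have expand : Real.sqrt (adet g y) * (-((Real.sqrt (adet g y))⁻¹ * lieT Svf (Mten g) y α β)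
        - 2 * (Real.sqrt (adet g y))⁻¹ * Mten g y α β + R1S g y α β)
      = -lieT Svf (Mten g) y α β - 2 * Mten g y α β
          + Real.sqrt (adet g y) * R1S g y α β := by
    field_simp
  rw [expand, hlie, hsplit]
  linarith [hkey]

end Key
/-! ### Wave operator in Fm form -/

section BoxForm

variable {U : Set Pt} {g : Pt → Matrix (Fin 4) (Fin 4) ℝ} {φ : Pt → ℝ} {p y : Pt} {α β γ : Fin 4}

def Qf (g : Pt → Matrix (Fin 4) (Fin 4) ℝ) (φ : Pt → ℝ) (α : Fin 4) (y : Pt) : ℝ :=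
  ∑ β : Fin 4, Fm g α β y * pd β φ y

lemma boxg_eq (g : Pt → Matrix (Fin 4) (Fin 4) ℝ) (φ : Pt → ℝ) :
    boxg g φ = fun y => (Real.sqrt (adet g y))⁻¹ * ∑ α : Fin 4, pd α (Qf g φ α) y := by
  funext y
  rw [boxg]
  congr 1
  refine Finset.sum_congr rfl fun α _ => ?_
  congr 1
  funext z
  rw [Qf, Finset.mul_sum]
  exact Finset.sum_congr rfl fun β _ => by rw [Fm, mul_assoc]

lemma divForm_eq (g : Pt → Matrix (Fin 4) (Fin 4) ℝ) (R : Pt → Fin 4 → Fin 4 → ℝ)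
    (φ : Pt → ℝ) (x : Pt) :
    divForm g R φ x = (Real.sqrt (adet g x))⁻¹ *
      ∑ α : Fin 4, pd α (fun z => ∑ β : Fin 4, (Real.sqrt (adet g z) * R z α β) * pd β φ z) x := by
  rw [divForm]
  congr 1
  refine Finset.sum_congr rfl fun α _ => ?_
  congr 1
  funext z
  rw [Finset.mul_sum]
  exact Finset.sum_congr rfl fun β _ => by rw [mul_assoc]

lemma sum_ite_one_mul (c : Fin 4 → ℝ) (α : Fin 4) :
    (∑ γ : Fin 4, (if γ = α then (1:ℝ) else 0) * c γ) = c α := by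
  simp [ite_mul]

lemma diff_coord (γ : Fin 4) : DifferentiableAt ℝ (fun z : Pt => z γ) y :=
  (ContinuousLinearMap.proj (R := ℝ) (φ := fun _ : Fin 4 => ℝ) γ).differentiableAt

end BoxForm

section BoxForm2

variable {U : Set Pt} {g : Pt → Matrix (Fin 4) (Fin 4) ℝ} {φ : Pt → ℝ}

lemma boxg_eq_at (g : Pt → Matrix (Fin 4) (Fin 4) ℝ) (φ : Pt → ℝ) (x : Pt) :
    boxg g φ x = (Real.sqrt (adet g x))⁻¹ * ∑ α : Fin 4, pd α (Qf g φ α) x :=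
  congrFun (boxg_eq g φ) x

lemma Xapp_Svf (f : Pt → ℝ) (x : Pt) : Xapp Svf f x = ∑ γ : Fin 4, x γ * pd γ f x := rfl

lemma sum_split (v I W : Fin 4 → ℝ) (D c : ℝ) :
    (∑ γ : Fin 4, v γ * (I γ * D + c * W γ))
      = (∑ γ : Fin 4, v γ * I γ) * D + c * ∑ γ : Fin 4, v γ * W γ := by
  rw [Finset.sum_mul, Finset.mul_sum, ← Finset.sum_add_distrib]
  exact Finset.sum_congr rfl fun γ _ => by ring

lemma scalar_cs (s A a v : ℝ) (hs : s ≠ 0) (hA : s ^ 2 = A) :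
    v * (-(s ^ 2)⁻¹ * (1 / (2 * s) * a)) = -(1/2) * s⁻¹ * (v * (A⁻¹ * a)) := by
  subst hA
  rw [one_div, mul_inv]
  ring

end BoxForm2
/-- the commutator formula for the scaling vector field `S`:
`[□_g,S]φ = (∇_αR^{αβ}∇_β)φ + (1/2)(4 + S ln d)□_gφ`,
`R = -d^{-1/2}L_S(d^{1/2}g⁻¹-h) - 2d^{-1/2}(d^{1/2}g⁻¹-h) + R₁`. -/
theorem box_commutator_scaling
    (U : Set Pt) (hU : IsOpen U)
    (g : Pt → Matrix (Fin 4) (Fin 4) ℝ) (hg : IsMetricOn g U)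
    (φ : Pt → ℝ) (hφ : ContDiffOn ℝ (⊤ : ℕ∞) φ U) :
    ∀ p ∈ U,
      boxg g (Xapp Svf φ) p - Xapp Svf (boxg g φ) p
        = divForm g
            (fun y α β =>
              -((Real.sqrt (adet g y))⁻¹ * lieT Svf (Mten g) y α β)
                - 2 * (Real.sqrt (adet g y))⁻¹ * Mten g y α β
                + R1S g y α β) φ p
          + (1/2) * (4 + Xapp Svf (fun y => Real.log (adet g y)) p) * boxg g φ p := by
  intro p hp
  have hφ' : Sm U φ := hφ
  have hUnh : U ∈ nhds p := hU.mem_nhds hp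
  have smG1 : ∀ β : Fin 4, Sm U (pd β φ) := fun β => Sm.pd hU hφ' β
  have smG2 : ∀ γ β : Fin 4, Sm U (pd γ (pd β φ)) := fun γ β => Sm.pd hU (smG1 β) γ
  have smF : ∀ α β : Fin 4, Sm U (Fm g α β) := fun α β => smFm hU hg α β
  have smdF : ∀ a α β : Fin 4, Sm U (pd a (Fm g α β)) := fun a α β => Sm.pd hU (smF α β) a
  have smQ : ∀ α : Fin 4, Sm U (Qf g φ α) := fun α =>
    Sm.sum fun β => (smF α β).mul (smG1 β)
  have smQ2 : ∀ α : Fin 4, Sm U (fun y => ∑ β : Fin 4,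
      Fm g α β y * (∑ γ : Fin 4, y γ * pd γ (pd β φ) y)) := fun α =>
    Sm.sum fun β => (smF α β).mul (Sm.sum fun γ => (Sm.coord γ).mul (smG2 γ β))
  have hsp : Real.sqrt (adet g p) ≠ 0 := ne_of_gt (sqrtAdet_pos hg hp)
  have hsq : Real.sqrt (adet g p) ^ 2 = adet g p := Real.sq_sqrt (le_of_lt (adet_pos hg hp))
  have hAne : adet g p ≠ 0 := ne_of_gt (adet_pos hg hp)
  have diffAdet : DifferentiableAt ℝ (adet g) p := (smAdet hU hg).diffAt hU hp
  have diffSqrt : DifferentiableAt ℝ (fun y => Real.sqrt (adet g y)) p :=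
    (smSqrtAdet hU hg).diffAt hU hp
  have diffInv : DifferentiableAt ℝ (fun y => (Real.sqrt (adet g y))⁻¹) p := diffSqrt.inv hsp
  have diffDQ : DifferentiableAt ℝ (fun y => ∑ α : Fin 4, pd α (Qf g φ α) y) p :=
    (Sm.sum fun α => Sm.pd hU (smQ α) α).diffAt hU hp
  -- (A) first-derivative expansion of Qf on U
  have hQf : ∀ y ∈ U, ∀ α : Fin 4, pd α (Qf g φ α) y
      = ∑ β : Fin 4, (pd α (Fm g α β) y * pd β φ y + Fm g α β y * pd α (pd β φ) y) := by
    intro y hy α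
    rw [show Qf g φ α = fun z => ∑ β : Fin 4, Fm g α β z * pd β φ z from rfl]
    rw [pd_sum (F := fun β => fun z => Fm g α β z * pd β φ z)
      fun β => ((smF α β).diffAt hU hy).mul ((smG1 β).diffAt hU hy)]
    exact Finset.sum_congr rfl fun β _ =>
      pd_mul ((smF α β).diffAt hU hy) ((smG1 β).diffAt hU hy)
  have hDQsum : (∑ α : Fin 4, pd α (Qf g φ α) p)
      = ∑ α : Fin 4, ∑ β : Fin 4,
          (pd α (Fm g α β) p * pd β φ p + Fm g α β p * pd α (pd β φ) p) :=
    Finset.sum_congr rfl fun α _ => hQf p hp α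
  -- (B) the box of φ at p
  have hB : boxg g φ p = (Real.sqrt (adet g p))⁻¹ * ∑ α : Fin 4, ∑ β : Fin 4,
      (pd α (Fm g α β) p * pd β φ p + Fm g α β p * pd α (pd β φ) p) := by
    rw [boxg_eq_at, hDQsum]
  -- (C) derivative of S φ on U
  have hψ : ∀ y ∈ U, ∀ β : Fin 4, pd β (Xapp Svf φ) y
      = pd β φ y + ∑ γ : Fin 4, y γ * pd γ (pd β φ) y := by
    intro y hy β
    rw [show Xapp Svf φ = fun z => ∑ γ : Fin 4, z γ * pd γ φ z from rfl]
    rw [pd_sum (F := fun γ => fun z : Pt => z γ * pd γ φ z)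
      fun γ => (diff_coord γ).mul ((smG1 γ).diffAt hU hy)]
    rw [Finset.sum_congr rfl fun γ _ => by
      rw [pd_mul (f₁ := fun z : Pt => z γ) (f₂ := pd γ φ)
        (diff_coord γ) ((smG1 γ).diffAt hU hy), pd_coord]]
    rw [Finset.sum_add_distrib, sum_ite_one_mul (fun γ => pd γ φ y)]
    congr 1
    exact Finset.sum_congr rfl fun γ _ => by rw [pd_comm hU hφ' hy]
  -- (D) congruence for Qf of S φ
  have hQψ : ∀ α : Fin 4, pd α (Qf g (Xapp Svf φ) α) p
      = pd α (fun y => Qf g φ α y + ∑ β : Fin 4,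
          Fm g α β y * (∑ γ : Fin 4, y γ * pd γ (pd β φ) y)) p := by
    intro α
    apply pd_congr_nhds
    filter_upwards [hUnh] with y hy
    show Qf g (Xapp Svf φ) α y = _
    rw [show Qf g (Xapp Svf φ) α y
      = ∑ β : Fin 4, Fm g α β y * pd β (Xapp Svf φ) y from rfl]
    rw [Finset.sum_congr rfl fun β _ => by rw [hψ y hy β, mul_add]]
    rw [Finset.sum_add_distrib]
    rfl
  -- (E) expansion of the second piece
  have hQ2exp : ∀ α : Fin 4, pd α (fun y => ∑ β : Fin 4,
      Fm g α β y * (∑ γ : Fin 4, y γ * pd γ (pd β φ) y)) p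
      = ∑ β : Fin 4, (pd α (Fm g α β) p * (∑ γ : Fin 4, p γ * pd γ (pd β φ) p)
          + Fm g α β p * (pd α (pd β φ) p + ∑ γ : Fin 4, p γ * pd α (pd γ (pd β φ)) p)) := by
    intro α
    rw [pd_sum (F := fun β => fun y => Fm g α β y * (∑ γ : Fin 4, y γ * pd γ (pd β φ) y))
      fun β => ((smF α β).diffAt hU hp).mul
        ((Sm.sum fun γ => (Sm.coord γ).mul (smG2 γ β)).diffAt hU hp)]
    refine Finset.sum_congr rfl fun β _ => ?_
    rw [pd_mul (f₁ := Fm g α β) (f₂ := fun y => ∑ γ : Fin 4, y γ * pd γ (pd β φ) y)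
      ((smF α β).diffAt hU hp) ((Sm.sum fun γ => (Sm.coord γ).mul (smG2 γ β)).diffAt hU hp)]
    congr 1
    congr 1
    rw [pd_sum (F := fun γ => fun y : Pt => y γ * pd γ (pd β φ) y)
      fun γ => (diff_coord γ).mul ((smG2 γ β).diffAt hU hp)]
    rw [Finset.sum_congr rfl fun γ _ => by
      rw [pd_mul (f₁ := fun z : Pt => z γ) (f₂ := pd γ (pd β φ))
        (diff_coord γ) ((smG2 γ β).diffAt hU hp), pd_coord]]
    rw [Finset.sum_add_distrib, sum_ite_one_mul (fun γ => pd γ (pd β φ) p)]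
  -- (F) the box of S φ at p
  have hL : boxg g (Xapp Svf φ) p = (Real.sqrt (adet g p))⁻¹ *
      ∑ α : Fin 4,
        ((∑ β : Fin 4, (pd α (Fm g α β) p * pd β φ p + Fm g α β p * pd α (pd β φ) p))
          + ∑ β : Fin 4, (pd α (Fm g α β) p * (∑ γ : Fin 4, p γ * pd γ (pd β φ) p)
            + Fm g α β p * (pd α (pd β φ) p
                + ∑ γ : Fin 4, p γ * pd α (pd γ (pd β φ)) p))) := by
    rw [boxg_eq_at]
    congr 1
    refine Finset.sum_congr rfl fun α _ => ?_
    rw [hQψ α,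
      pd_add (f₁ := Qf g φ α) (f₂ := fun y => ∑ β : Fin 4,
          Fm g α β y * (∑ γ : Fin 4, y γ * pd γ (pd β φ) y))
        ((smQ α).diffAt hU hp) ((smQ2 α).diffAt hU hp),
      hQf p hp α, hQ2exp α]
  -- (G) second derivatives of Qf at p
  have e4 : ∀ γ α : Fin 4, pd γ (pd α (Qf g φ α)) p
      = ∑ β : Fin 4, (pd γ (pd α (Fm g α β)) p * pd β φ p
          + pd α (Fm g α β) p * pd γ (pd β φ) p
          + pd γ (Fm g α β) p * pd α (pd β φ) p
          + Fm g α β p * pd α (pd γ (pd β φ)) p) := by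
    intro γ α
    have hcongr : pd γ (pd α (Qf g φ α)) p
        = pd γ (fun y => ∑ β : Fin 4,
            (pd α (Fm g α β) y * pd β φ y + Fm g α β y * pd α (pd β φ) y)) p :=
      pd_congr_nhds (by filter_upwards [hUnh] with y hy; exact hQf y hy α)
    rw [hcongr]
    rw [pd_sum (F := fun β => fun y =>
        pd α (Fm g α β) y * pd β φ y + Fm g α β y * pd α (pd β φ) y)
      fun β => (((smdF α α β).diffAt hU hp).mul ((smG1 β).diffAt hU hp)).add
        (((smF α β).diffAt hU hp).mul ((smG2 α β).diffAt hU hp))]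
    refine Finset.sum_congr rfl fun β _ => ?_
    rw [pd_add (f₁ := fun y => pd α (Fm g α β) y * pd β φ y)
        (f₂ := fun y => Fm g α β y * pd α (pd β φ) y)
        (((smdF α α β).diffAt hU hp).mul ((smG1 β).diffAt hU hp))
        (((smF α β).diffAt hU hp).mul ((smG2 α β).diffAt hU hp)),
      pd_mul (f₁ := pd α (Fm g α β)) (f₂ := pd β φ)
        ((smdF α α β).diffAt hU hp) ((smG1 β).diffAt hU hp),
      pd_mul (f₁ := Fm g α β) (f₂ := pd α (pd β φ))
        ((smF α β).diffAt hU hp) ((smG2 α β).diffAt hU hp)]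
    rw [pd_comm (f := pd β φ) hU (smG1 β) hp]
    ring
  -- (H) derivative formulas for sqrt/inv/log of adet
  have hpdsqrt : ∀ γ : Fin 4, pd γ (fun y => Real.sqrt (adet g y)) p
      = 1 / (2 * Real.sqrt (adet g p)) * pd γ (adet g) p := fun γ =>
    pd_comp_hasDerivAt diffAdet (Real.hasDerivAt_sqrt hAne)
  have hpdinv : ∀ γ : Fin 4, pd γ (fun y => (Real.sqrt (adet g y))⁻¹) p
      = -(Real.sqrt (adet g p) ^ 2)⁻¹ * pd γ (fun y => Real.sqrt (adet g y)) p := fun γ =>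
    pd_comp_hasDerivAt diffSqrt (hasDerivAt_inv hsp)
  have hpdlog : ∀ γ : Fin 4, pd γ (fun y => Real.log (adet g y)) p
      = (adet g p)⁻¹ * pd γ (adet g) p := fun γ =>
    pd_comp_hasDerivAt diffAdet (Real.hasDerivAt_log hAne)
  have perγ : ∀ γ : Fin 4, p γ * pd γ (fun y => (Real.sqrt (adet g y))⁻¹) p
      = -(1/2) * (Real.sqrt (adet g p))⁻¹
          * (p γ * pd γ (fun y => Real.log (adet g y)) p) := by
    intro γ
    rw [hpdinv γ, hpdsqrt γ, hpdlog γ]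
    exact scalar_cs (Real.sqrt (adet g p)) (adet g p) (pd γ (adet g) p) (p γ) hsp hsq
  have hCSsum : (∑ γ : Fin 4, p γ * pd γ (fun y => (Real.sqrt (adet g y))⁻¹) p)
      = -(1/2) * (Real.sqrt (adet g p))⁻¹
          * Xapp Svf (fun y => Real.log (adet g y)) p := by
    rw [Xapp_Svf, Finset.sum_congr rfl fun γ _ => perγ γ, ← Finset.mul_sum]
  -- (I) big expansion of pd γ of box φ
  have eBig : ∀ γ : Fin 4, pd γ (fun y => (Real.sqrt (adet g y))⁻¹
        * ∑ α : Fin 4, pd α (Qf g φ α) y) p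
      = pd γ (fun y => (Real.sqrt (adet g y))⁻¹) p * (∑ α : Fin 4, pd α (Qf g φ α) p)
        + (Real.sqrt (adet g p))⁻¹ * ∑ α : Fin 4, ∑ β : Fin 4,
            (pd γ (pd α (Fm g α β)) p * pd β φ p
              + pd α (Fm g α β) p * pd γ (pd β φ) p
              + pd γ (Fm g α β) p * pd α (pd β φ) p
              + Fm g α β p * pd α (pd γ (pd β φ)) p) := by
    intro γ
    rw [pd_mul (f₁ := fun y => (Real.sqrt (adet g y))⁻¹)
      (f₂ := fun y => ∑ α : Fin 4, pd α (Qf g φ α) y) diffInv diffDQ]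
    have hW : pd γ (fun y => ∑ α : Fin 4, pd α (Qf g φ α) y) p
        = ∑ α : Fin 4, ∑ β : Fin 4,
            (pd γ (pd α (Fm g α β)) p * pd β φ p
              + pd α (Fm g α β) p * pd γ (pd β φ) p
              + pd γ (Fm g α β) p * pd α (pd β φ) p
              + Fm g α β p * pd α (pd γ (pd β φ)) p) := by
      rw [pd_sum (F := fun α => pd α (Qf g φ α))
        fun α => (Sm.pd hU (smQ α) α).diffAt hU hp]
      exact Finset.sum_congr rfl fun α _ => e4 γ α
    rw [hW]
  -- (J) S of box φ at p
  have hS : Xapp Svf (boxg g φ) p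
      = -(1/2) * (Real.sqrt (adet g p))⁻¹ * Xapp Svf (fun y => Real.log (adet g y)) p
          * (∑ α : Fin 4, ∑ β : Fin 4,
              (pd α (Fm g α β) p * pd β φ p + Fm g α β p * pd α (pd β φ) p))
        + (Real.sqrt (adet g p))⁻¹ * ∑ γ : Fin 4, p γ * ∑ α : Fin 4, ∑ β : Fin 4,
            (pd γ (pd α (Fm g α β)) p * pd β φ p
              + pd α (Fm g α β) p * pd γ (pd β φ) p
              + pd γ (Fm g α β) p * pd α (pd β φ) p
              + Fm g α β p * pd α (pd γ (pd β φ)) p) := by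
    rw [Xapp_Svf, boxg_eq g φ]
    rw [Finset.sum_congr rfl fun γ _ => by rw [eBig γ]]
    rw [sum_split (fun γ => p γ) (fun γ => pd γ (fun y => (Real.sqrt (adet g y))⁻¹) p)
      (fun γ => ∑ α : Fin 4, ∑ β : Fin 4,
            (pd γ (pd α (Fm g α β)) p * pd β φ p
              + pd α (Fm g α β) p * pd γ (pd β φ) p
              + pd γ (Fm g α β) p * pd α (pd β φ) p
              + Fm g α β p * pd α (pd γ (pd β φ)) p))
      (∑ α : Fin 4, pd α (Qf g φ α) p) ((Real.sqrt (adet g p))⁻¹)]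
    rw [hCSsum, hDQsum]
  -- (K) divergence-form term
  have hR : divForm g
      (fun y α β =>
        -((Real.sqrt (adet g y))⁻¹ * lieT Svf (Mten g) y α β)
          - 2 * (Real.sqrt (adet g y))⁻¹ * Mten g y α β
          + R1S g y α β) φ p
      = (Real.sqrt (adet g p))⁻¹ * ∑ α : Fin 4, ∑ β : Fin 4,
          (-(pd α (Fm g α β) p + ∑ γ : Fin 4, p γ * pd γ (pd α (Fm g α β)) p) * pd β φ p
            + (-(∑ γ : Fin 4, p γ * pd γ (Fm g α β) p)) * pd α (pd β φ) p) := by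
    rw [divForm_eq]
    congr 1
    refine Finset.sum_congr rfl fun α _ => ?_
    have hc : pd α (fun z => ∑ β : Fin 4, (Real.sqrt (adet g z) *
          (-((Real.sqrt (adet g z))⁻¹ * lieT Svf (Mten g) z α β)
            - 2 * (Real.sqrt (adet g z))⁻¹ * Mten g z α β
            + R1S g z α β)) * pd β φ z) p
        = pd α (fun z => ∑ β : Fin 4,
            (-(∑ γ : Fin 4, z γ * pd γ (Fm g α β) z)) * pd β φ z) p := by
      apply pd_congr_nhds
      filter_upwards [hUnh] with y hy
      exact Finset.sum_congr rfl fun β _ => by rw [keyId hU hg hy α β]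
    rw [hc]
    rw [pd_sum (F := fun β => fun z =>
        (-(∑ γ : Fin 4, z γ * pd γ (Fm g α β) z)) * pd β φ z)
      fun β => (DifferentiableAt.neg ((Sm.sum fun γ =>
        (Sm.coord γ).mul (smdF γ α β)).diffAt hU hp)).mul ((smG1 β).diffAt hU hp)]
    refine Finset.sum_congr rfl fun β _ => ?_
    rw [pd_mul (f₁ := fun z => -(∑ γ : Fin 4, z γ * pd γ (Fm g α β) z)) (f₂ := pd β φ)
      (DifferentiableAt.neg ((Sm.sum fun γ =>
        (Sm.coord γ).mul (smdF γ α β)).diffAt hU hp)) ((smG1 β).diffAt hU hp)]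
    have h1 : pd α (fun z => -(∑ γ : Fin 4, z γ * pd γ (Fm g α β) z)) p
        = -(pd α (Fm g α β) p + ∑ γ : Fin 4, p γ * pd γ (pd α (Fm g α β)) p) := by
      rw [pd_neg (f := fun z => ∑ γ : Fin 4, z γ * pd γ (Fm g α β) z)]
      rw [pd_sum (F := fun γ => fun z : Pt => z γ * pd γ (Fm g α β) z)
        fun γ => (diff_coord γ).mul ((smdF γ α β).diffAt hU hp)]
      rw [Finset.sum_congr rfl fun γ _ => by
        rw [pd_mul (f₁ := fun z : Pt => z γ) (f₂ := pd γ (Fm g α β))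
          (diff_coord γ) ((smdF γ α β).diffAt hU hp), pd_coord]]
      rw [Finset.sum_add_distrib, sum_ite_one_mul (fun γ => pd γ (Fm g α β) p)]
      congr 2
      exact Finset.sum_congr rfl fun γ _ => by
        rw [pd_comm (f := Fm g α β) hU (smF α β) hp]
    rw [h1]
  -- final assembly
  rw [hL, hS, hR, hB]
  simp only [Fin.sum_univ_four]
  ring
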